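/- Let V : {ρ>0}×ℝ² → ℝ be C¹, let η₁ (with parameter a₁) and η₂ (with parameter a₂) be admissible, and let ε₁, ε₂ : {ρ>0}×ℝ² → (0,∞) be continuous. Let (ρ,δ,γ) : [0,∞) → {ρ>0}×ℝ² be a solution of the polar unicycle whose controls are the inverse optimal feedback v(t) = −ρ ε₁ (η₁′)⁻¹(ε₁|ν₁|) sgn(ν₁) and ω(t) = −ε₂ (η₂′)⁻¹(ε₂|ν₂|) sgn(ν₂), where ε₁, ε₂, ν₁, ν₂ are evaluated along the trajectory, and suppose V(ρ(t),δ(t),γ(t)) → 0 as t → ∞. Then the cost J = ∫₀^∞ [ℓη₁(ε₁|ν₁|) + ℓη₂(ε₂|ν₂|) + η₁(|v|/(ε₁ρ)) + η₂(|ω|/ε₂)] dt satisfies J = V(ρ(0),δ(0),γ(0)); that is, this feedback minimizes the cost. -/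

import Mathlib

/-!
STATEMENT 9: If the controls are the inverse optimal feedback
v = −ρ ε₁ (η₁′)⁻¹(ε₁|ν₁|) sgn(ν₁), ω = −ε₂ (η₂′)⁻¹(ε₂|ν₂|) sgn(ν₂),
and V → 0 along the trajectory, then the cost
J = ∫₀^∞ [ℓη₁(ε₁|ν₁|) + ℓη₂(ε₂|ν₂|) + η₁(|v|/(ε₁ρ)) + η₂(|ω|/ε₂)] dt
equals V(ρ(0),δ(0),γ(0)); i.e. this feedback minimizes the cost.
-/
noncomputable section

open Real Set Filter MeasureTheory Topology

/-- The domain [0,a) for a ∈ (0,∞], encoded with a : EReal. -/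
def domA (a : EReal) : Set ℝ := {r : ℝ | 0 ≤ r ∧ (r : EReal) < a}

/-- The filter of real numbers tending to a from the left (r → a⁻);
for a = ⊤ this is the filter at infinity. -/
def leftLimA (a : EReal) : Filter ℝ :=
  Filter.comap (fun r : ℝ => (r : EReal)) (nhdsWithin a (Set.Iio a))

/-- η : [0,a) → [0,∞) is admissible with derivative η′ and inverse g = (η′)⁻¹. -/
structure IsAdmissible (a : EReal) (η η' g : ℝ → ℝ) : Prop where
  ha : 0 < a
  hasDeriv : ∀ r ∈ domA a, HasDerivWithinAt η (η' r) (domA a) r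
  nonneg : ∀ r ∈ domA a, 0 ≤ η r
  zero : η 0 = 0
  mono : StrictMonoOn η (domA a)
  tendsto : Tendsto η (leftLimA a) atTop
  dcont : ContinuousOn η' (domA a)
  dmono : StrictMonoOn η' (domA a)
  dzero : η' 0 = 0
  dtendsto : Tendsto η' (leftLimA a) atTop
  gmem : ∀ s : ℝ, 0 ≤ s → g s ∈ domA a
  gleft : ∀ r ∈ domA a, g (η' r) = r
  gright : ∀ s : ℝ, 0 ≤ s → η' (g s) = s

/-- Legendre–Fenchel transform ℓη(r) = ∫₀^r (η′)⁻¹(s) ds, with g = (η′)⁻¹. -/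
def lfT (g : ℝ → ℝ) (r : ℝ) : ℝ := ∫ s in (0 : ℝ)..r, g s

namespace IsAdmissible

variable {a : EReal} {η η' g : ℝ → ℝ}

lemma zero_mem (h : IsAdmissible a η η' g) : (0:ℝ) ∈ domA a := ⟨le_refl _, by exact_mod_cast h.ha⟩

lemma gzero (h : IsAdmissible a η η' g) : g 0 = 0 := by
  have := h.gleft 0 h.zero_mem
  rwa [h.dzero] at this

lemma gnonneg (h : IsAdmissible a η η' g) {s : ℝ} (hs : 0 ≤ s) : 0 ≤ g s := (h.gmem s hs).1

lemma gmono (h : IsAdmissible a η η' g) : MonotoneOn g (Ici 0) := by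
  intro s hs s' hs' hle
  by_contra hcon
  push_neg at hcon
  have h1 : η' (g s') < η' (g s) :=
    h.dmono (h.gmem s' hs') (h.gmem s hs) hcon
  rw [h.gright s hs, h.gright s' hs'] at h1
  exact absurd hle (not_le.2 h1)

lemma mem_nhds (h : IsAdmissible a η η' g) {x : ℝ} (hx : x ∈ domA a) (hx0 : 0 < x) : domA a ∈ 𝓝 x := by
  obtain ⟨z, hz1, hz2⟩ := exists_between hx.2
  have hzt : z ≠ ⊤ := (hz2.trans_le le_top).ne
  have hzb : z ≠ ⊥ := ((EReal.bot_lt_coe x).trans hz1).ne'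
  set b := z.toReal with hb
  have hzb' : (b : EReal) = z := EReal.coe_toReal hzt hzb
  have hIoo : Ioo 0 b ⊆ domA a := by
    intro r hr
    exact ⟨hr.1.le, by rw [← hzb'] at hz2; exact lt_trans (by exact_mod_cast hr.2) hz2⟩
  refine Filter.mem_of_superset (isOpen_Ioo.mem_nhds ?_) hIoo
  exact ⟨hx0, by rw [← hzb'] at hz1; exact_mod_cast hz1⟩

lemma icc_sub (h : IsAdmissible a η η' g) {r₁ r₂ : ℝ} (h0 : 0 ≤ r₁) (h2 : r₂ ∈ domA a) : Icc r₁ r₂ ⊆ domA a :=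
  fun x hx => ⟨h0.trans hx.1, lt_of_le_of_lt (by exact_mod_cast hx.2) h2.2⟩

lemma eta_cont (h : IsAdmissible a η η' g) : ContinuousOn η (domA a) :=
  fun r hr => (h.hasDeriv r hr).continuousWithinAt

lemma ftc (h : IsAdmissible a η η' g) {r₁ r₂ : ℝ} (h0 : 0 ≤ r₁) (h12 : r₁ ≤ r₂) (h2 : r₂ ∈ domA a) :
    ∫ x in r₁..r₂, η' x = η r₂ - η r₁ := by
  apply intervalIntegral.integral_eq_sub_of_hasDeriv_right_of_le h12
    (h.eta_cont.mono (h.icc_sub h0 h2))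
  · intro x hx
    have hx0 : 0 < x := lt_of_le_of_lt h0 hx.1
    have hxm : x ∈ domA a := h.icc_sub h0 h2 ⟨hx.1.le, hx.2.le⟩
    exact ((h.hasDeriv x hxm).hasDerivAt (h.mem_nhds hxm hx0)).hasDerivWithinAt
  · exact (h.dcont.mono (by rw [uIcc_of_le h12]; exact h.icc_sub h0 h2)).intervalIntegrable

lemma key (h : IsAdmissible a η η' g) {s₁ s₂ : ℝ} (h0 : 0 ≤ s₁) (h12 : s₁ ≤ s₂) :
    |(s₂ * g s₂ - lfT g s₂ - η (g s₂)) - (s₁ * g s₁ - lfT g s₁ - η (g s₁))|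
      ≤ (s₂ - s₁) * (g s₂ - g s₁) := by
  set r₁ := g s₁ with hr₁
  set r₂ := g s₂ with hr₂
  have h0' : 0 ≤ s₂ := h0.trans h12
  have hr0 : 0 ≤ r₁ := h.gnonneg h0
  have hrm : r₂ ∈ domA a := h.gmem s₂ h0'
  have hrle : r₁ ≤ r₂ := h.gmono h0 h0' h12
  -- g is integrable on intervals
  have hgint : ∀ u w : ℝ, 0 ≤ u → u ≤ w → IntervalIntegrable g volume u w := by
    intro u w hu huw
    have hsub : uIcc u w ⊆ Ici 0 := by
      rw [uIcc_of_le huw]; exact fun x hx => hu.trans hx.1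
    exact (h.gmono.mono hsub).intervalIntegrable
  have hX : lfT g s₂ - lfT g s₁ = ∫ u in s₁..s₂, g u := by
    have := intervalIntegral.integral_add_adjacent_intervals
      (hgint 0 s₁ le_rfl h0) (hgint s₁ s₂ h0 h12)
    simp only [lfT]; linarith
  have hgl : r₁ * (s₂ - s₁) ≤ ∫ u in s₁..s₂, g u := by
    have : ∫ u in s₁..s₂, (r₁ : ℝ) ≤ ∫ u in s₁..s₂, g u := by
      apply intervalIntegral.integral_mono_on h12 intervalIntegrable_const
        (hgint s₁ s₂ h0 h12)
      intro x hx
      exact h.gmono h0 (h0.trans hx.1) hx.1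
    rw [intervalIntegral.integral_const, smul_eq_mul] at this
    linarith
  have hgu : (∫ u in s₁..s₂, g u) ≤ r₂ * (s₂ - s₁) := by
    have : ∫ u in s₁..s₂, g u ≤ ∫ u in s₁..s₂, (r₂ : ℝ) := by
      apply intervalIntegral.integral_mono_on h12 (hgint s₁ s₂ h0 h12)
        intervalIntegrable_const
      intro x hx
      exact h.gmono (h0.trans hx.1) h0' hx.2
    rw [intervalIntegral.integral_const, smul_eq_mul] at this
    linarith
  have hY : η r₂ - η r₁ = ∫ x in r₁..r₂, η' x := (h.ftc hr0 hrle hrm).symm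
  have hηint : IntervalIntegrable η' volume r₁ r₂ :=
    (h.dcont.mono (by rw [uIcc_of_le hrle]; exact h.icc_sub hr0 hrm)).intervalIntegrable
  have hr1m : r₁ ∈ domA a := h.gmem s₁ h0
  have hηl : s₁ * (r₂ - r₁) ≤ ∫ x in r₁..r₂, η' x := by
    have : ∫ x in r₁..r₂, (s₁ : ℝ) ≤ ∫ x in r₁..r₂, η' x := by
      apply intervalIntegral.integral_mono_on hrle intervalIntegrable_const hηint
      intro x hx
      have hxm : x ∈ domA a := h.icc_sub hr0 hrm hx
      have := h.dmono.monotoneOn hr1m hxm hx.1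
      rwa [h.gright s₁ h0] at this
    rw [intervalIntegral.integral_const, smul_eq_mul] at this
    linarith
  have hηu : (∫ x in r₁..r₂, η' x) ≤ s₂ * (r₂ - r₁) := by
    have : ∫ x in r₁..r₂, η' x ≤ ∫ x in r₁..r₂, (s₂ : ℝ) := by
      apply intervalIntegral.integral_mono_on hrle hηint intervalIntegrable_const
      intro x hx
      have hxm : x ∈ domA a := h.icc_sub hr0 hrm hx
      have := h.dmono.monotoneOn hxm hrm hx.2
      rwa [h.gright s₂ h0'] at this
    rw [intervalIntegral.integral_const, smul_eq_mul] at this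
    linarith
  rw [abs_le]
  constructor <;> nlinarith

lemma young (h : IsAdmissible a η η' g) {s : ℝ} (hs : 0 ≤ s) :
    lfT g s + η (g s) = s * g s := by
  set φ : ℝ → ℝ := fun u => u * g u - lfT g u - η (g u) with hφ
  have hφ0 : φ 0 = 0 := by
    simp [hφ, h.gzero, lfT, intervalIntegral.integral_same, h.zero]
  have hmain : φ s = 0 := by
    have hbound : ∀ n : ℕ, 0 < n → |φ s| ≤ s * g s / n := by
      intro n hn
      have hn' : (0:ℝ) < n := by exact_mod_cast hn
      have hns : (n:ℝ) * s / n = s := by field_simp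
      have htel := Finset.sum_range_sub (fun k : ℕ => φ ((k:ℝ) * s / n)) n
      push_cast at htel
      rw [hns] at htel
      have h0n : φ ((0:ℝ) * s / n) = 0 := by
        rw [zero_mul, zero_div, hφ0]
      rw [h0n, sub_zero] at htel
      have htel2 := Finset.sum_range_sub (fun k : ℕ => (s/n) * g ((k:ℝ) * s / n)) n
      push_cast at htel2
      rw [hns] at htel2
      calc |φ s| = |∑ k ∈ Finset.range n, (φ (((k:ℝ)+1) * s / n) - φ ((k:ℝ) * s / n))| := by
            rw [htel]
        _ ≤ ∑ k ∈ Finset.range n, |φ (((k:ℝ)+1) * s / n) - φ ((k:ℝ) * s / n)| :=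
            Finset.abs_sum_le_sum_abs _ _
        _ ≤ ∑ k ∈ Finset.range n,
              ((s/n) * g (((k:ℝ)+1) * s / n) - (s/n) * g ((k:ℝ) * s / n)) := by
            refine Finset.sum_le_sum fun k _ => ?_
            have h1 : (0:ℝ) ≤ (k:ℝ) * s / n := by positivity
            have h2 : (k:ℝ) * s / n ≤ ((k:ℝ)+1) * s / n := by
              rw [div_le_div_iff₀ hn' hn']
              nlinarith
            have hk := h.key h1 h2
            have hd : ((k:ℝ)+1) * s / n - (k:ℝ) * s / n = s / n := by ring
            rw [hd] at hk
            calc |φ (((k:ℝ)+1) * s / n) - φ ((k:ℝ) * s / n)| = _ := by rw [hφ]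
              _ ≤ (s/n) * (g (((k:ℝ)+1) * s / n) - g ((k:ℝ) * s / n)) := hk
              _ = (s/n) * g (((k:ℝ)+1) * s / n) - (s/n) * g ((k:ℝ) * s / n) := by ring
        _ = (s/n) * g s - (s/n) * g ((0:ℝ) * s / n) := by rw [htel2]
        _ = s * g s / n := by
            rw [zero_mul, zero_div, h.gzero]
            ring
    by_contra hne
    have habs : 0 < |φ s| := abs_pos.2 hne
    obtain ⟨n, hn⟩ := exists_nat_gt (s * g s / |φ s|)
    have hn0 : 0 < n := by
      by_contra hc
      push_neg at hc
      interval_cases n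
      have : 0 ≤ s * g s / |φ s| :=
        div_nonneg (mul_nonneg hs (h.gnonneg hs)) (abs_nonneg _)
      linarith
    have hb := hbound n hn0
    have hn' : (0:ℝ) < n := by exact_mod_cast hn0
    have h1 : s * g s < n * |φ s| := (div_lt_iff₀ habs).1 hn
    have h2 : s * g s / n < |φ s| := by
      rw [div_lt_iff₀ hn']
      linarith [mul_comm (n:ℝ) |φ s|]
    linarith
  have hg0 : 0 ≤ g s := h.gnonneg hs
  simp only [hφ] at hmain
  linarith

end IsAdmissible

lemma mul_sign_eq_abs (x : ℝ) : x * Real.sign x = |x| := by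
  rcases lt_trichotomy x 0 with hx|hx|hx
  · rw [Real.sign_of_neg hx, abs_of_neg hx]; ring
  · simp [hx]
  · rw [Real.sign_of_pos hx, abs_of_pos hx]; ring

lemma abs_sign_of_ne (x : ℝ) (hx : x ≠ 0) : |Real.sign x| = 1 := by
  rcases hx.lt_or_gt with h|h
  · rw [Real.sign_of_neg h]; simp
  · rw [Real.sign_of_pos h]; simp

/-- The continuous linear map (u,w,x) ↦ aρ·u + aδ·w + aγ·x, the total derivative
of a function of (ρ,δ,γ) with partial derivatives (aρ,aδ,aγ). -/
def gradMap (aρ aδ aγ : ℝ) : (ℝ × ℝ × ℝ) →L[ℝ] ℝ :=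
  aρ • ContinuousLinearMap.fst ℝ ℝ (ℝ × ℝ)
    + aδ • ((ContinuousLinearMap.fst ℝ ℝ ℝ).comp (ContinuousLinearMap.snd ℝ ℝ (ℝ × ℝ)))
    + aγ • ((ContinuousLinearMap.snd ℝ ℝ ℝ).comp (ContinuousLinearMap.snd ℝ ℝ (ℝ × ℝ)))

lemma gradMap_apply (aρ aδ aγ u w x : ℝ) :
    gradMap aρ aδ aγ (u, w, x) = aρ * u + aδ * w + aγ * x := by
  simp [gradMap]

/-- ν₁ = −(∂V/∂ρ) ρ cos γ + (∂V/∂δ + ∂V/∂γ) sin γ, built from the partial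
derivatives Vρ, Vδ, Vγ of V at the state p = (ρ,δ,γ). -/
def nuOne (Vρ Vδ Vγ : ℝ × ℝ × ℝ → ℝ) (p : ℝ × ℝ × ℝ) : ℝ :=
  -(Vρ p) * p.1 * Real.cos p.2.2 + (Vδ p + Vγ p) * Real.sin p.2.2

/-- ν₂ = −∂V/∂γ. -/
def nuTwo (Vγ : ℝ × ℝ × ℝ → ℝ) (p : ℝ × ℝ × ℝ) : ℝ := -(Vγ p)

theorem inverse_optimal_feedback_minimizes_cost
    (V Vρ Vδ Vγ ε₁ ε₂ : ℝ × ℝ × ℝ → ℝ)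
    (a₁ a₂ : EReal) (η₁ η₁' g₁ η₂ η₂' g₂ : ℝ → ℝ)
    (hadm₁ : IsAdmissible a₁ η₁ η₁' g₁) (hadm₂ : IsAdmissible a₂ η₂ η₂' g₂)
    -- V is C¹ on {ρ > 0} × ℝ² with partial derivatives Vρ, Vδ, Vγ
    (hV : ∀ p : ℝ × ℝ × ℝ, 0 < p.1 → HasFDerivAt V (gradMap (Vρ p) (Vδ p) (Vγ p)) p)
    (hVρc : ContinuousOn Vρ {p : ℝ × ℝ × ℝ | 0 < p.1})
    (hVδc : ContinuousOn Vδ {p : ℝ × ℝ × ℝ | 0 < p.1})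
    (hVγc : ContinuousOn Vγ {p : ℝ × ℝ × ℝ | 0 < p.1})
    -- ε₁, ε₂ are continuous and positive on {ρ > 0} × ℝ²
    (hε₁c : ContinuousOn ε₁ {p : ℝ × ℝ × ℝ | 0 < p.1})
    (hε₂c : ContinuousOn ε₂ {p : ℝ × ℝ × ℝ | 0 < p.1})
    (hε₁pos : ∀ p : ℝ × ℝ × ℝ, 0 < p.1 → 0 < ε₁ p)
    (hε₂pos : ∀ p : ℝ × ℝ × ℝ, 0 < p.1 → 0 < ε₂ p)
    -- the trajectory: a solution of the polar unicycle on [0,∞)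
    (ρ δ γ v ω : ℝ → ℝ)
    (hρpos : ∀ t ∈ Set.Ici (0 : ℝ), 0 < ρ t)
    (hρ : ∀ t ∈ Set.Ici (0 : ℝ), HasDerivAt ρ (-(v t) * Real.cos (γ t)) t)
    (hδ : ∀ t ∈ Set.Ici (0 : ℝ), HasDerivAt δ ((v t / ρ t) * Real.sin (γ t)) t)
    (hγ : ∀ t ∈ Set.Ici (0 : ℝ),
      HasDerivAt γ ((v t / ρ t) * Real.sin (γ t) - ω t) t)
    -- the controls are the inverse optimal feedback
    (hv : ∀ t ∈ Set.Ici (0 : ℝ),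
      v t = -(ρ t) * ε₁ (ρ t, δ t, γ t)
        * g₁ (ε₁ (ρ t, δ t, γ t) * |nuOne Vρ Vδ Vγ (ρ t, δ t, γ t)|)
        * Real.sign (nuOne Vρ Vδ Vγ (ρ t, δ t, γ t)))
    (hω : ∀ t ∈ Set.Ici (0 : ℝ),
      ω t = -(ε₂ (ρ t, δ t, γ t))
        * g₂ (ε₂ (ρ t, δ t, γ t) * |nuTwo Vγ (ρ t, δ t, γ t)|)
        * Real.sign (nuTwo Vγ (ρ t, δ t, γ t)))
    -- V converges to zero along the trajectory
    (hlim : Tendsto (fun t => V (ρ t, δ t, γ t)) atTop (nhds 0)) :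
    (∫⁻ t in Set.Ici (0 : ℝ),
        ENNReal.ofReal
          (lfT g₁ (ε₁ (ρ t, δ t, γ t) * |nuOne Vρ Vδ Vγ (ρ t, δ t, γ t)|)
            + lfT g₂ (ε₂ (ρ t, δ t, γ t) * |nuTwo Vγ (ρ t, δ t, γ t)|)
            + η₁ (|v t| / (ε₁ (ρ t, δ t, γ t) * ρ t))
            + η₂ (|ω t| / ε₂ (ρ t, δ t, γ t))))
      = ENNReal.ofReal (V (ρ 0, δ 0, γ 0)) := by
  classical
  set F : ℝ → ℝ := fun t =>
    lfT g₁ (ε₁ (ρ t, δ t, γ t) * |nuOne Vρ Vδ Vγ (ρ t, δ t, γ t)|)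
      + lfT g₂ (ε₂ (ρ t, δ t, γ t) * |nuTwo Vγ (ρ t, δ t, γ t)|)
      + η₁ (|v t| / (ε₁ (ρ t, δ t, γ t) * ρ t))
      + η₂ (|ω t| / ε₂ (ρ t, δ t, γ t)) with hFdef
  -- claim A : the arguments of η₁, η₂ equal g of s
  have hA1 : ∀ t ∈ Set.Ici (0:ℝ),
      |v t| / (ε₁ (ρ t, δ t, γ t) * ρ t)
        = g₁ (ε₁ (ρ t, δ t, γ t) * |nuOne Vρ Vδ Vγ (ρ t, δ t, γ t)|) := by
    intro t ht
    have hρt := hρpos t ht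
    have hε := hε₁pos (ρ t, δ t, γ t) hρt
    set ν := nuOne Vρ Vδ Vγ (ρ t, δ t, γ t) with hν
    have hs0 : 0 ≤ ε₁ (ρ t, δ t, γ t) * |ν| := mul_nonneg hε.le (abs_nonneg _)
    have hG : 0 ≤ g₁ (ε₁ (ρ t, δ t, γ t) * |ν|) := hadm₁.gnonneg hs0
    rcases eq_or_ne ν 0 with h0 | h0
    · rw [hv t ht, ← hν, h0]
      simp [Real.sign_zero, hadm₁.gzero]
    · rw [hv t ht, ← hν]
      have h1 : -(ρ t) * ε₁ (ρ t, δ t, γ t) * g₁ (ε₁ (ρ t, δ t, γ t) * |ν|) * Real.sign ν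
          = (ρ t * ε₁ (ρ t, δ t, γ t) * g₁ (ε₁ (ρ t, δ t, γ t) * |ν|)) * (-Real.sign ν) := by
        ring
      rw [h1, abs_mul, abs_neg, abs_sign_of_ne ν h0, mul_one,
        abs_of_nonneg (by positivity)]
      field_simp
  have hA2 : ∀ t ∈ Set.Ici (0:ℝ),
      |ω t| / ε₂ (ρ t, δ t, γ t)
        = g₂ (ε₂ (ρ t, δ t, γ t) * |nuTwo Vγ (ρ t, δ t, γ t)|) := by
    intro t ht
    have hρt := hρpos t ht
    have hε := hε₂pos (ρ t, δ t, γ t) hρt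
    set ν := nuTwo Vγ (ρ t, δ t, γ t) with hν
    have hs0 : 0 ≤ ε₂ (ρ t, δ t, γ t) * |ν| := mul_nonneg hε.le (abs_nonneg _)
    have hG : 0 ≤ g₂ (ε₂ (ρ t, δ t, γ t) * |ν|) := hadm₂.gnonneg hs0
    rcases eq_or_ne ν 0 with h0 | h0
    · rw [hω t ht, ← hν, h0]
      simp [Real.sign_zero, hadm₂.gzero]
    · rw [hω t ht, ← hν]
      have h1 : -(ε₂ (ρ t, δ t, γ t)) * g₂ (ε₂ (ρ t, δ t, γ t) * |ν|) * Real.sign ν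
          = (ε₂ (ρ t, δ t, γ t) * g₂ (ε₂ (ρ t, δ t, γ t) * |ν|)) * (-Real.sign ν) := by
        ring
      rw [h1, abs_mul, abs_neg, abs_sign_of_ne ν h0, mul_one,
        abs_of_nonneg (by positivity)]
      field_simp
  -- nonnegativity of the integrand
  have hFnn : ∀ t ∈ Set.Ici (0:ℝ), 0 ≤ F t := by
    intro t ht
    have hρt := hρpos t ht
    have hε1 := hε₁pos (ρ t, δ t, γ t) hρt
    have hε2 := hε₂pos (ρ t, δ t, γ t) hρt
    have hs10 : 0 ≤ ε₁ (ρ t, δ t, γ t) * |nuOne Vρ Vδ Vγ (ρ t, δ t, γ t)| :=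
      mul_nonneg hε1.le (abs_nonneg _)
    have hs20 : 0 ≤ ε₂ (ρ t, δ t, γ t) * |nuTwo Vγ (ρ t, δ t, γ t)| :=
      mul_nonneg hε2.le (abs_nonneg _)
    have l1 : 0 ≤ lfT g₁ (ε₁ (ρ t, δ t, γ t) * |nuOne Vρ Vδ Vγ (ρ t, δ t, γ t)|) :=
      intervalIntegral.integral_nonneg hs10 fun u hu => hadm₁.gnonneg hu.1
    have l2 : 0 ≤ lfT g₂ (ε₂ (ρ t, δ t, γ t) * |nuTwo Vγ (ρ t, δ t, γ t)|) :=
      intervalIntegral.integral_nonneg hs20 fun u hu => hadm₂.gnonneg hu.1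
    have e1 : 0 ≤ η₁ (|v t| / (ε₁ (ρ t, δ t, γ t) * ρ t)) := by
      rw [hA1 t ht]
      exact hadm₁.nonneg _ (hadm₁.gmem _ hs10)
    have e2 : 0 ≤ η₂ (|ω t| / ε₂ (ρ t, δ t, γ t)) := by
      rw [hA2 t ht]
      exact hadm₂.nonneg _ (hadm₂.gmem _ hs20)
    simp only [hFdef]
    linarith
  -- the integrand is (minus) the derivative of V along the trajectory
  have hkey : ∀ t ∈ Set.Ici (0:ℝ),
      HasDerivAt (fun u => -(V (ρ u, δ u, γ u))) (F t) t := by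
    intro t ht
    have hρt := hρpos t ht
    have hε1 := hε₁pos (ρ t, δ t, γ t) hρt
    have hε2 := hε₂pos (ρ t, δ t, γ t) hρt
    have hc : HasDerivAt (fun u => (ρ u, δ u, γ u))
        ((-(v t) * Real.cos (γ t)), ((v t / ρ t) * Real.sin (γ t),
          (v t / ρ t) * Real.sin (γ t) - ω t)) t :=
      (hρ t ht).prodMk ((hδ t ht).prodMk (hγ t ht))
    have hVd := (hV (ρ t, δ t, γ t) hρt).comp_hasDerivAt t hc
    have hVd' := hVd.neg
    have hval : -(gradMap (Vρ (ρ t, δ t, γ t)) (Vδ (ρ t, δ t, γ t)) (Vγ (ρ t, δ t, γ t))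
        ((-(v t) * Real.cos (γ t)), ((v t / ρ t) * Real.sin (γ t),
          (v t / ρ t) * Real.sin (γ t) - ω t))) = F t := by
      rw [gradMap_apply]
      set ν₁ := nuOne Vρ Vδ Vγ (ρ t, δ t, γ t) with hν₁
      set ν₂ := nuTwo Vγ (ρ t, δ t, γ t) with hν₂
      set s₁ := ε₁ (ρ t, δ t, γ t) * |ν₁| with hs₁
      set s₂ := ε₂ (ρ t, δ t, γ t) * |ν₂| with hs₂
      have hs10 : 0 ≤ s₁ := mul_nonneg hε1.le (abs_nonneg _)
      have hs20 : 0 ≤ s₂ := mul_nonneg hε2.le (abs_nonneg _)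
      have hB1 : ν₁ * (v t / ρ t) = -(s₁ * g₁ s₁) := by
        rw [hv t ht, ← hν₁, ← hs₁]
        have : -(ρ t) * ε₁ (ρ t, δ t, γ t) * g₁ s₁ * Real.sign ν₁ / ρ t
            = -(ε₁ (ρ t, δ t, γ t) * g₁ s₁ * Real.sign ν₁) := by
          field_simp
        rw [this]
        have h2 : ν₁ * -(ε₁ (ρ t, δ t, γ t) * g₁ s₁ * Real.sign ν₁)
            = -(ε₁ (ρ t, δ t, γ t) * g₁ s₁ * (ν₁ * Real.sign ν₁)) := by ring
        rw [h2, mul_sign_eq_abs, hs₁]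
        ring
      have hB2 : ν₂ * ω t = -(s₂ * g₂ s₂) := by
        rw [hω t ht, ← hν₂, ← hs₂]
        have h2 : ν₂ * (-(ε₂ (ρ t, δ t, γ t)) * g₂ s₂ * Real.sign ν₂)
            = -(ε₂ (ρ t, δ t, γ t) * g₂ s₂ * (ν₂ * Real.sign ν₂)) := by ring
        rw [h2, mul_sign_eq_abs, hs₂]
        ring
      have hY1 : lfT g₁ s₁ + η₁ (g₁ s₁) = s₁ * g₁ s₁ := hadm₁.young hs10
      have hY2 : lfT g₂ s₂ + η₂ (g₂ s₂) = s₂ * g₂ s₂ := hadm₂.young hs20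
      have hD : Vρ (ρ t, δ t, γ t) * (-(v t) * Real.cos (γ t))
          + Vδ (ρ t, δ t, γ t) * ((v t / ρ t) * Real.sin (γ t))
          + Vγ (ρ t, δ t, γ t) * ((v t / ρ t) * Real.sin (γ t) - ω t)
          = ν₁ * (v t / ρ t) + ν₂ * ω t := by
        rw [hν₁, hν₂]
        simp only [nuOne, nuTwo]
        field_simp
        ring
      have hFt : F t = lfT g₁ s₁ + lfT g₂ s₂ + η₁ (g₁ s₁) + η₂ (g₂ s₂) := by
        simp only [hFdef]
        rw [hA1 t ht, hA2 t ht, ← hν₁, ← hν₂, ← hs₁, ← hs₂]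
      rw [hFt, hD, hB1, hB2]
      linarith
    rw [hval] at hVd'
    exact hVd'
  -- improper integral
  have hlim' : Tendsto (fun t => -(V (ρ t, δ t, γ t))) atTop (𝓝 0) := by
    have := hlim.neg
    rwa [neg_zero] at this
  have hint : IntegrableOn F (Ioi (0:ℝ)) :=
    integrableOn_Ioi_deriv_of_nonneg' hkey (fun x hx => hFnn x hx.out.le) hlim'
  have heq : ∫ x in Ioi (0:ℝ), F x = 0 - (-(V (ρ 0, δ 0, γ 0))) :=
    integral_Ioi_of_hasDerivAt_of_tendsto' hkey hint hlim'
  rw [zero_sub, neg_neg] at heq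
  have hnn' : 0 ≤ᵐ[volume.restrict (Ioi (0:ℝ))] F := by
    filter_upwards [ae_restrict_mem measurableSet_Ioi] with x hx
    exact hFnn x hx.out.le
  calc (∫⁻ t in Set.Ici (0:ℝ), ENNReal.ofReal (F t))
      = ∫⁻ t in Set.Ioi (0:ℝ), ENNReal.ofReal (F t) := by
        exact setLIntegral_congr Ioi_ae_eq_Ici.symm
    _ = ENNReal.ofReal (∫ x in Ioi (0:ℝ), F x) :=
        (ofReal_integral_eq_lintegral_ofReal hint hnn').symm
    _ = ENNReal.ofReal (V (ρ 0, δ 0, γ 0)) := by rw [heq]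

end
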